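/- Let $n \ge 2$ and $0 < s < 1$. Define $G(\varepsilon) = \int_{1-\varepsilon}^1 \int_{\sqrt{1-t^2}}^{\sqrt{\varepsilon(2-\varepsilon)}} \frac{\rho^{n-2}}{(\rho^2 - (1-t^2))^s}\, d\rho\, dt$ for $0 < \varepsilon < 1$. Then there exist constants $0 < c_1 \le c_2$ and $\varepsilon_0 > 0$ such that $c_1\, \varepsilon^{\frac{n+1}{2}-s} \le G(\varepsilon) \le c_2\, \varepsilon^{\frac{n+1}{2}-s}$ for $0 < \varepsilon < \varepsilon_0$. -/

import Mathlib

set_option maxHeartbeats 1000000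

open MeasureTheory Real intervalIntegral


-- majorant integrability
lemma maj_ii {s a b : ℝ} (hs : s < 1) :
    IntervalIntegrable (fun ρ => (ρ - a) ^ (-s)) volume a b := by
  have h := (intervalIntegral.intervalIntegrable_rpow' (a := 0) (b := b - a)
    (r := -s) (by linarith)).comp_sub_right a
  simpa using h

lemma maj_int {s a b : ℝ} (hs0 : 0 < s) (hs : s < 1) (hab : a ≤ b) :
    ∫ ρ in a..b, (ρ - a) ^ (-s) = (b - a) ^ (1 - s) / (1 - s) := by
  rw [show (fun ρ => (ρ - a) ^ (-s)) = fun ρ => (fun x : ℝ => x ^ (-s)) (ρ - a) from rfl]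
  rw [intervalIntegral.integral_comp_sub_right (fun x : ℝ => x ^ (-s)) a]
  rw [integral_rpow (Or.inl (by linarith))]
  rw [sub_self, Real.zero_rpow (by linarith)]
  ring_nf

lemma f_nonneg {n : ℕ} {s c ρ : ℝ} (hρ : 0 ≤ ρ) (hc : c ≤ ρ ^ 2) :
    0 ≤ ρ ^ (n-2) / (ρ ^ 2 - c) ^ s :=
  div_nonneg (pow_nonneg hρ _) (Real.rpow_nonneg (by linarith) _)

lemma ptwise {n : ℕ} {s a b ρ : ℝ} (hs0 : 0 < s) (ha : 0 < a)
    (h1 : a ≤ ρ) (h2 : ρ ≤ b) :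
    ρ ^ (n-2) / (ρ ^ 2 - a ^ 2) ^ s ≤ b ^ (n-2) * a ^ (-s) * (ρ - a) ^ (-s) := by
  rcases eq_or_lt_of_le h1 with h | h
  · rw [← h, sub_self, sub_self, Real.zero_rpow (by linarith), Real.zero_rpow (by linarith),
      div_zero, mul_zero]
  · have hρ : 0 < ρ := lt_trans ha h
    have key : ((ρ - a) * a) ^ s ≤ (ρ ^ 2 - a ^ 2) ^ s := by
      apply Real.rpow_le_rpow (mul_nonneg (by linarith) ha.le) _ hs0.le
      nlinarith
    have h3 : ρ ^ (n-2) / (ρ ^ 2 - a ^ 2) ^ s ≤ b ^ (n-2) / ((ρ - a) * a) ^ s := by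
      apply div_le_div₀ (pow_nonneg (by linarith) _) (pow_le_pow_left₀ hρ.le h2 _)
        (Real.rpow_pos_of_pos (mul_pos (by linarith) ha) _) key
    calc ρ ^ (n-2) / (ρ ^ 2 - a ^ 2) ^ s ≤ b ^ (n-2) / ((ρ - a) * a) ^ s := h3
      _ = b ^ (n-2) * a ^ (-s) * (ρ - a) ^ (-s) := by
          rw [Real.mul_rpow (by linarith) ha.le, Real.rpow_neg ha.le, Real.rpow_neg (by linarith),
            div_eq_mul_inv, mul_inv]
          ring

lemma f_meas {n : ℕ} {s c : ℝ} (hs0 : 0 ≤ s) :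
    Measurable (fun ρ : ℝ => ρ ^ (n-2) / (ρ ^ 2 - c) ^ s) := by
  apply Measurable.div
  · exact (measurable_id.pow_const _)
  · exact ((Real.continuous_rpow_const hs0).comp (by continuity)).measurable

lemma inner_ii {n : ℕ} {s a b : ℝ} (hs0 : 0 < s) (hs1 : s < 1) (ha : 0 < a) (hab : a ≤ b) :
    IntervalIntegrable (fun ρ : ℝ => ρ ^ (n-2) / (ρ ^ 2 - a ^ 2) ^ s) volume a b := by
  apply IntervalIntegrable.mono_fun ((maj_ii (a := a) (b := b) hs1).const_mul
    (b ^ (n-2) * a ^ (-s)))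
  · exact (f_meas hs0.le).aestronglyMeasurable
  · rw [Set.uIoc_of_le hab]
    refine (MeasureTheory.ae_restrict_iff' measurableSet_Ioc).2 (.of_forall fun ρ hρ => ?_)
    have h1 : (0:ℝ) ≤ ρ ^ (n-2) / (ρ ^ 2 - a ^ 2) ^ s :=
      f_nonneg (by linarith [hρ.1]) (by nlinarith [hρ.1, hρ.2, ha])
    simp only [Real.norm_eq_abs]
    rw [abs_of_nonneg h1]
    exact le_trans (ptwise hs0 ha hρ.1.le hρ.2) (le_abs_self _)

lemma inner_le {n : ℕ} {s a b : ℝ} (hs0 : 0 < s) (hs1 : s < 1) (ha : 0 < a) (hab : a ≤ b) :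
    (∫ ρ in a..b, ρ ^ (n-2) / (ρ ^ 2 - a ^ 2) ^ s)
      ≤ b ^ (n-2) * a ^ (-s) * ((b - a) ^ (1 - s) / (1 - s)) := by
  have h := intervalIntegral.integral_mono_on hab (inner_ii hs0 hs1 ha hab)
    (((maj_ii (a := a) (b := b) hs1).const_mul (b ^ (n-2) * a ^ (-s))))
    (fun ρ hρ => ptwise hs0 ha hρ.1 hρ.2)
  rw [intervalIntegral.integral_const_mul, maj_int hs0 hs1 hab] at h
  exact h

lemma inner_lb {n : ℕ} {s a b c d m : ℝ} (hs0 : 0 < s) (hs1 : s < 1) (ha : 0 < a)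
    (hac : a ≤ c) (hcd : c ≤ d) (hdb : d ≤ b) (hm : 0 ≤ m)
    (hbound : ∀ ρ ∈ Set.Icc c d, m ≤ ρ ^ (n-2) / (ρ ^ 2 - a ^ 2) ^ s) :
    m * (d - c) ≤ ∫ ρ in a..b, ρ ^ (n-2) / (ρ ^ 2 - a ^ 2) ^ s := by
  set f : ℝ → ℝ := fun ρ => ρ ^ (n-2) / (ρ ^ 2 - a ^ 2) ^ s with hf
  have hab : a ≤ b := le_trans hac (le_trans hcd hdb)
  have hI : IntervalIntegrable f volume a b := inner_ii hs0 hs1 ha hab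
  have hsub1 : Set.uIcc a c ⊆ Set.uIcc a b := by
    rw [Set.uIcc_of_le hac, Set.uIcc_of_le hab]
    exact Set.Icc_subset_Icc le_rfl (le_trans hcd hdb)
  have hsub2 : Set.uIcc c b ⊆ Set.uIcc a b := by
    rw [Set.uIcc_of_le (le_trans hcd hdb), Set.uIcc_of_le hab]
    exact Set.Icc_subset_Icc hac le_rfl
  have hsub3 : Set.uIcc c d ⊆ Set.uIcc a b := by
    rw [Set.uIcc_of_le hcd, Set.uIcc_of_le hab]
    exact Set.Icc_subset_Icc hac hdb
  have hsub4 : Set.uIcc d b ⊆ Set.uIcc a b := by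
    rw [Set.uIcc_of_le hdb, Set.uIcc_of_le hab]
    exact Set.Icc_subset_Icc (le_trans hac hcd) le_rfl
  have hnn : ∀ ρ ∈ Set.uIcc a b, 0 ≤ f ρ := by
    intro ρ hρ
    rw [Set.uIcc_of_le hab] at hρ
    exact f_nonneg (by linarith [hρ.1]) (by nlinarith [hρ.1, ha])
  have e1 : (∫ ρ in a..b, f ρ) = (∫ ρ in a..c, f ρ) + (∫ ρ in c..b, f ρ) :=
    (intervalIntegral.integral_add_adjacent_intervals (hI.mono_set hsub1)
      (hI.mono_set hsub2)).symm
  have e2 : (∫ ρ in c..b, f ρ) = (∫ ρ in c..d, f ρ) + (∫ ρ in d..b, f ρ) :=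
    (intervalIntegral.integral_add_adjacent_intervals (hI.mono_set hsub3)
      (hI.mono_set hsub4)).symm
  have p1 : 0 ≤ ∫ ρ in a..c, f ρ :=
    intervalIntegral.integral_nonneg hac fun ρ hρ => hnn ρ (hsub1 (by
      rw [Set.uIcc_of_le hac]; exact hρ))
  have p2 : 0 ≤ ∫ ρ in d..b, f ρ :=
    intervalIntegral.integral_nonneg hdb fun ρ hρ => hnn ρ (hsub4 (by
      rw [Set.uIcc_of_le hdb]; exact hρ))
  have p3 : m * (d - c) ≤ ∫ ρ in c..d, f ρ := by
    have := intervalIntegral.integral_mono_on hcd (_root_.intervalIntegrable_const (c := m))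
      (hI.mono_set hsub3) hbound
    rwa [intervalIntegral.integral_const, smul_eq_mul, mul_comm] at this
  linarith

lemma g_aesm {n : ℕ} {s ε : ℝ} (hs0 : 0 < s) (hε1 : ε ≤ 1) :
    AEStronglyMeasurable (fun t => ∫ ρ in Real.sqrt (1 - t ^ 2)..Real.sqrt (ε * (2 - ε)),
      ρ ^ (n - 2) / (ρ ^ 2 - (1 - t ^ 2)) ^ s) (volume.restrict (Set.Ioc (1 - ε) 1)) := by
  set R := Real.sqrt (ε * (2 - ε)) with hR
  set F : ℝ × ℝ → ℝ := fun q => Set.indicator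
    {q : ℝ × ℝ | Real.sqrt (1 - q.1 ^ 2) < q.2 ∧ q.2 ≤ R}
    (fun q => q.2 ^ (n - 2) / (q.2 ^ 2 - (1 - q.1 ^ 2)) ^ s) q with hFdef
  have hS : MeasurableSet {q : ℝ × ℝ | Real.sqrt (1 - q.1 ^ 2) < q.2 ∧ q.2 ≤ R} := by
    apply MeasurableSet.inter
    · exact measurableSet_lt ((Real.continuous_sqrt.comp (by continuity)).measurable)
        measurable_snd
    · exact measurableSet_le measurable_snd measurable_const
  have hfm : Measurable fun q : ℝ × ℝ => q.2 ^ (n - 2) / (q.2 ^ 2 - (1 - q.1 ^ 2)) ^ s := by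
    apply Measurable.div
    · exact measurable_snd.pow_const _
    · exact ((Real.continuous_rpow_const hs0.le).comp (by continuity)).measurable
  have hF : StronglyMeasurable F := (hfm.indicator hS).stronglyMeasurable
  have hG0 := hF.integral_prod_right' (ν := volume)
  refine hG0.aestronglyMeasurable.congr ?_
  refine (MeasureTheory.ae_restrict_iff' measurableSet_Ioc).2 (.of_forall fun t ht => ?_)
  have h1t : 0 ≤ 1 - t ^ 2 := by nlinarith [ht.1, ht.2]
  have haR : Real.sqrt (1 - t ^ 2) ≤ R := by
    apply Real.sqrt_le_sqrt; nlinarith [ht.1, ht.2]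
  show (∫ ρ, F (t, ρ))
      = ∫ ρ in Real.sqrt (1 - t ^ 2)..R, ρ ^ (n - 2) / (ρ ^ 2 - (1 - t ^ 2)) ^ s
  rw [intervalIntegral.integral_of_le haR,
    ← MeasureTheory.integral_indicator measurableSet_Ioc]
  congr 1


lemma pow_sqrt {ε : ℝ} (hε : 0 ≤ ε) (m : ℕ) :
    (Real.sqrt ε) ^ m = ε ^ ((m : ℝ) / 2) := by
  rw [Real.sqrt_eq_rpow, ← Real.rpow_natCast (ε ^ ((1:ℝ)/2)) m, ← Real.rpow_mul hε]
  congr 1; ring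

lemma low_arith {n : ℕ} (hn : 2 ≤ n) {s ε : ℝ} (hε : 0 < ε) :
    (ε/2) * ((Real.sqrt ε) ^ (n-2) / (2*ε) ^ s * (Real.sqrt ((7:ℝ)/4 * ε) - Real.sqrt ((3:ℝ)/2 * ε)))
      = ((Real.sqrt ((7:ℝ)/4) - Real.sqrt ((3:ℝ)/2)) * 2 ^ (-s) / 2) * ε ^ (((n:ℝ)+1)/2 - s) := by
  have hc : ((n - 2 : ℕ) : ℝ) = (n : ℝ) - 2 := by
    push_cast [Nat.cast_sub hn]; ring
  have e1 : ε ^ (((n:ℝ)+1)/2 - s)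
      = ε ^ (((n:ℝ)-2)/2) * (ε ^ s)⁻¹ * ε ^ ((1:ℝ)/2) * ε := by
    have : ε ^ (((n:ℝ)+1)/2 - s) = ε ^ (((n:ℝ)-2)/2) * ε ^ (-s) * ε ^ ((1:ℝ)/2) * ε ^ (1:ℝ) := by
      rw [← Real.rpow_add hε, ← Real.rpow_add hε, ← Real.rpow_add hε]; congr 1; ring
    rw [this, Real.rpow_neg hε.le, Real.rpow_one]
  rw [Real.sqrt_mul (by norm_num) ε, Real.sqrt_mul (by norm_num) ε, pow_sqrt hε.le,
    Real.mul_rpow (by norm_num) hε.le, Real.rpow_neg (by norm_num : (0:ℝ) ≤ 2),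
    Real.sqrt_eq_rpow ε, hc, e1]
  have h2s : (2:ℝ) ^ s ≠ 0 := ne_of_gt (Real.rpow_pos_of_pos (by norm_num) s)
  have hεs : (ε:ℝ) ^ s ≠ 0 := ne_of_gt (Real.rpow_pos_of_pos hε s)
  field_simp


lemma up_arith {n : ℕ} (hn : 2 ≤ n) {s ε R : ℝ} (hs0 : 0 < s) (hs1 : s < 1) (hε : 0 < ε)
    (hR0 : 0 ≤ R) (hR : R ≤ Real.sqrt (2*ε)) :
    R ^ (n-2) * (R ^ (1-s) / (1-s)) * (ε ^ (1 - s/2) / (1 - s/2))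
      ≤ (2 ^ (((n:ℝ)-1-s)/2) / ((1-s)*(1-s/2))) * ε ^ (((n:ℝ)+1)/2 - s) := by
  have hc : ((n - 2 : ℕ) : ℝ) = (n : ℝ) - 2 := by push_cast [Nat.cast_sub hn]; ring
  have h2ε : (0:ℝ) ≤ 2 * ε := by linarith
  have step1 : R ^ (n-2) ≤ (2*ε) ^ (((n:ℝ)-2)/2) := by
    calc R ^ (n-2) ≤ (Real.sqrt (2*ε)) ^ (n-2) := pow_le_pow_left₀ hR0 hR _
      _ = (2*ε) ^ (((n-2:ℕ):ℝ)/2) := pow_sqrt h2ε _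
      _ = (2*ε) ^ (((n:ℝ)-2)/2) := by rw [hc]
  have step2 : R ^ (1-s) ≤ (2*ε) ^ ((1-s)/2) := by
    calc R ^ (1-s) ≤ (Real.sqrt (2*ε)) ^ (1-s) :=
          Real.rpow_le_rpow hR0 hR (by linarith)
      _ = ((2*ε) ^ ((1:ℝ)/2)) ^ (1-s) := by rw [Real.sqrt_eq_rpow]
      _ = (2*ε) ^ ((1-s)/2) := by rw [← Real.rpow_mul h2ε]; congr 1; ring
  have key : (2*ε) ^ (((n:ℝ)-2)/2) * ((2*ε) ^ ((1-s)/2) / (1-s)) * (ε ^ (1 - s/2) / (1 - s/2))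
      = (2 ^ (((n:ℝ)-1-s)/2) / ((1-s)*(1-s/2))) * ε ^ (((n:ℝ)+1)/2 - s) := by
    rw [Real.mul_rpow (by norm_num) hε.le, Real.mul_rpow (by norm_num) hε.le]
    rw [show (2:ℝ) ^ (((n:ℝ)-1-s)/2) = 2 ^ (((n:ℝ)-2)/2) * 2 ^ ((1-s)/2) from by
      rw [← Real.rpow_add (by norm_num)]; congr 1; ring]
    rw [show ε ^ (((n:ℝ)+1)/2 - s) = ε ^ (((n:ℝ)-2)/2) * ε ^ ((1-s)/2) * ε ^ (1 - s/2) from by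
      rw [← Real.rpow_add hε, ← Real.rpow_add hε]; congr 1; ring]
    field_simp
  rw [← key]
  have p1 : (0:ℝ) < 1 - s := by linarith
  have p2 : (0:ℝ) < 1 - s/2 := by linarith
  gcongr


noncomputable def knappG (n : ℕ) (s ε : ℝ) : ℝ :=
  ∫ t in (1 - ε)..1, ∫ ρ in Real.sqrt (1 - t ^ 2)..Real.sqrt (ε * (2 - ε)),
    ρ ^ (n - 2) / (ρ ^ 2 - (1 - t ^ 2)) ^ s

theorem stmt6 (n : ℕ) (hn : 2 ≤ n) (s : ℝ) (hs : s ∈ Set.Ioo (0 : ℝ) 1) :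
    ∃ c₁ c₂ ε₀ : ℝ, 0 < c₁ ∧ c₁ ≤ c₂ ∧ 0 < ε₀ ∧
      ∀ ε : ℝ, 0 < ε → ε < ε₀ →
        c₁ * ε ^ (((n : ℝ) + 1) / 2 - s) ≤ knappG n s ε ∧
          knappG n s ε ≤ c₂ * ε ^ (((n : ℝ) + 1) / 2 - s) := by
  obtain ⟨hs0, hs1⟩ := hs
  have hδ : 0 < Real.sqrt ((7:ℝ)/4) - Real.sqrt ((3:ℝ)/2) := by
    have := Real.sqrt_lt_sqrt (by norm_num : (0:ℝ) ≤ 3/2) (by norm_num : (3:ℝ)/2 < 7/4)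
    linarith
  set c₁ : ℝ := (Real.sqrt ((7:ℝ)/4) - Real.sqrt ((3:ℝ)/2)) * 2 ^ (-s) / 2 with hc₁def
  set c₂ : ℝ := 2 ^ (((n:ℝ)-1-s)/2) / ((1-s)*(1-s/2)) with hc₂def
  have hc₁ : 0 < c₁ :=
    div_pos (mul_pos hδ (Real.rpow_pos_of_pos (by norm_num) _)) two_pos
  have hc₂ : 0 < c₂ :=
    div_pos (Real.rpow_pos_of_pos (by norm_num) _) (mul_pos (by linarith) (by linarith))
  refine ⟨min c₁ c₂, max c₁ c₂, 1/4, lt_min hc₁ hc₂,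
    min_le_of_left_le (le_max_left _ _), by norm_num, ?_⟩
  intro ε hε hε4
  have hε4' : ε ≤ 1/4 := hε4.le
  have hε1 : ε ≤ 1 := by linarith
  set R := Real.sqrt (ε * (2 - ε)) with hRdef
  have hR2 : R ^ 2 = ε * (2-ε) := Real.sq_sqrt (by nlinarith)
  have hRpos : 0 < R := Real.sqrt_pos.2 (by nlinarith)
  have hRle : R ≤ Real.sqrt (2*ε) := Real.sqrt_le_sqrt (by nlinarith)
  set g : ℝ → ℝ := fun t => ∫ ρ in Real.sqrt (1 - t ^ 2)..R,
      ρ ^ (n - 2) / (ρ ^ 2 - (1 - t ^ 2)) ^ s with hgdef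
  have hknapp : knappG n s ε = ∫ t in Set.Ioc (1-ε) 1, g t := by
    rw [knappG, intervalIntegral.integral_of_le (by linarith)]
  have hg_nonneg : ∀ t ∈ Set.Ioc (1-ε) 1, 0 ≤ g t := by
    intro t ht
    have h1t : 0 ≤ 1 - t^2 := by nlinarith [ht.1, ht.2]
    have haR : Real.sqrt (1-t^2) ≤ R := Real.sqrt_le_sqrt (by nlinarith [ht.1, ht.2])
    refine intervalIntegral.integral_nonneg haR fun ρ hρ => f_nonneg ?_ ?_
    · exact le_trans (Real.sqrt_nonneg _) hρ.1
    · nlinarith [hρ.1, Real.sq_sqrt h1t, Real.sqrt_nonneg (1 - t^2)]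
  -- per-t upper bound
  have hup : ∀ t ∈ Set.Ioo (1-ε) 1,
      g t ≤ R ^ (n-2) * (1-t) ^ (-(s/2)) * (R ^ (1-s) / (1-s)) := by
    intro t ht
    have h1t : 0 < 1 - t^2 := by nlinarith [ht.1, ht.2]
    have ha : 0 < Real.sqrt (1 - t^2) := Real.sqrt_pos.2 h1t
    have haR : Real.sqrt (1-t^2) ≤ R := Real.sqrt_le_sqrt (by nlinarith [ht.1, ht.2])
    have h := inner_le (n := n) hs0 hs1 ha haR
    simp only [Real.sq_sqrt h1t.le] at h
    refine le_trans h ?_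
    have hstep : Real.sqrt (1-t^2) ^ (-s) ≤ (1-t) ^ (-(s/2)) := by
      have h1 : Real.sqrt (1-t) ≤ Real.sqrt (1-t^2) :=
        Real.sqrt_le_sqrt (by nlinarith [ht.1, ht.2])
      have h2 : Real.sqrt (1-t^2) ^ (-s) ≤ Real.sqrt (1-t) ^ (-s) :=
        Real.rpow_le_rpow_of_nonpos (Real.sqrt_pos.2 (by linarith [ht.2])) h1 (by linarith)
      refine le_trans h2 (le_of_eq ?_)
      rw [Real.sqrt_eq_rpow, ← Real.rpow_mul (by linarith [ht.2] : (0:ℝ) ≤ 1 - t)]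
      congr 1; ring
    have hsub : (R - Real.sqrt (1-t^2)) ^ (1-s) ≤ R ^ (1-s) :=
      Real.rpow_le_rpow (by linarith) (by linarith [Real.sqrt_nonneg (1-t^2)]) (by linarith)
    have hnn1 : (0:ℝ) ≤ R ^ (n-2) := pow_nonneg hRpos.le _
    have hnn2 : (0:ℝ) ≤ Real.sqrt (1-t^2) ^ (-s) := Real.rpow_nonneg (Real.sqrt_nonneg _) _
    have hnn3 : (0:ℝ) ≤ (1-t) ^ (-(s/2)) := Real.rpow_nonneg (by linarith [ht.2]) _
    have h1s : (0:ℝ) < 1 - s := by linarith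
    gcongr
  -- a.e. t ≠ 1
  have hne : ∀ᵐ t : ℝ ∂volume, t ≠ (1:ℝ) := by
    rw [MeasureTheory.ae_iff]
    convert Real.volume_singleton (a := (1:ℝ)) using 2
    ext x; simp
  -- majorant
  set maj : ℝ → ℝ := fun t => R ^ (n-2) * (1-t) ^ (-(s/2)) * (R ^ (1-s) / (1-s)) with hmajdef
  have hmaj_ii : IntervalIntegrable maj volume (1-ε) 1 := by
    have h0 : IntervalIntegrable (fun x : ℝ => x ^ (-(s/2))) volume (1-1) (1-(1-ε)) :=
      intervalIntegrable_rpow' (by linarith)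
    have h1 := (h0.comp_sub_left 1).const_mul (R ^ (n-2))
    have h2 := h1.mul_const (R ^ (1-s) / (1-s))
    have h3 : IntervalIntegrable maj volume 1 (1-ε) := by simpa using h2
    exact h3.symm
  have hmajIntOn : IntegrableOn maj (Set.Ioc (1-ε) 1) volume := by
    rw [← intervalIntegrable_iff_integrableOn_Ioc_of_le (by linarith)]
    exact hmaj_ii
  have hg_int : IntegrableOn g (Set.Ioc (1-ε) 1) volume := by
    refine MeasureTheory.Integrable.mono' hmajIntOn (g_aesm hs0 hε1) ?_
    filter_upwards [MeasureTheory.ae_restrict_mem measurableSet_Ioc,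
      MeasureTheory.ae_restrict_of_ae hne] with t htm htne
    rw [Real.norm_eq_abs, abs_of_nonneg (hg_nonneg t htm)]
    exact hup t ⟨htm.1, lt_of_le_of_ne htm.2 htne⟩
  constructor
  · -- LOWER BOUND
    set cc := Real.sqrt ((3:ℝ)/2 * ε) with hccdef
    set dd := Real.sqrt ((7:ℝ)/4 * ε) with hdddef
    set m : ℝ := (Real.sqrt ε) ^ (n-2) / (2*ε) ^ s with hmdef
    have hm0 : 0 ≤ m :=
      div_nonneg (pow_nonneg (Real.sqrt_nonneg _) _) (Real.rpow_nonneg (by linarith) _)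
    have hlow : ∀ t ∈ Set.Ioo (1-ε/2) 1, m * (dd - cc) ≤ g t := by
      intro t ht
      have ht1 : 1 - ε/2 < t := ht.1
      have ht2 : t < 1 := ht.2
      have h1t : 0 < 1 - t^2 := by nlinarith
      have ha : 0 < Real.sqrt (1 - t^2) := Real.sqrt_pos.2 h1t
      have ha2 : Real.sqrt (1-t^2) ^ 2 = 1 - t^2 := Real.sq_sqrt h1t.le
      have h1tε : 1 - t^2 ≤ ε := by nlinarith
      have hac : Real.sqrt (1-t^2) ≤ cc := Real.sqrt_le_sqrt (by nlinarith)
      have hcd : cc ≤ dd := Real.sqrt_le_sqrt (by nlinarith)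
      have hdb : dd ≤ R := Real.sqrt_le_sqrt (by nlinarith)
      have hcc2 : cc ^ 2 = (3:ℝ)/2 * ε := Real.sq_sqrt (by linarith)
      have hdd2 : dd ^ 2 = (7:ℝ)/4 * ε := Real.sq_sqrt (by linarith)
      have hccpos : 0 < cc := Real.sqrt_pos.2 (by linarith)
      have hbound : ∀ ρ ∈ Set.Icc cc dd,
          m ≤ ρ ^ (n-2) / (ρ ^ 2 - Real.sqrt (1-t^2) ^ 2) ^ s := by
        intro ρ hρ
        rw [ha2]
        have hρpos : 0 < ρ := lt_of_lt_of_le hccpos hρ.1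
        have hsq1 : (3:ℝ)/2 * ε ≤ ρ^2 := by nlinarith [hρ.1]
        have hsq2 : ρ^2 ≤ (7:ℝ)/4 * ε := by nlinarith [hρ.2, hρ.1]
        have hden1 : 0 < ρ^2 - (1 - t^2) := by nlinarith
        have hden2 : ρ^2 - (1 - t^2) ≤ 2*ε := by nlinarith
        rw [hmdef]
        apply div_le_div₀ (pow_nonneg hρpos.le _)
        · apply pow_le_pow_left₀ (Real.sqrt_nonneg _)
          calc Real.sqrt ε ≤ cc := Real.sqrt_le_sqrt (by linarith)
            _ ≤ ρ := hρ.1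
        · exact Real.rpow_pos_of_pos hden1 _
        · exact Real.rpow_le_rpow hden1.le hden2 hs0.le
      have h := inner_lb (n := n) hs0 hs1 ha hac hcd hdb hm0 hbound
      simp only [Real.sq_sqrt h1t.le] at h
      exact h
    have hsub : Set.Ioo (1-ε/2) 1 ⊆ Set.Ioc (1-ε) 1 := fun t ht =>
      ⟨by linarith [ht.1], ht.2.le⟩
    have h1 : ∫ t in Set.Ioo (1-ε/2) 1, g t ≤ ∫ t in Set.Ioc (1-ε) 1, g t := by
      refine MeasureTheory.setIntegral_mono_set hg_int ?_ (HasSubset.Subset.eventuallyLE hsub)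
      filter_upwards [MeasureTheory.ae_restrict_mem measurableSet_Ioc] with t htm
      exact hg_nonneg t htm
    have h2 : (m*(dd-cc)) * (ε/2) ≤ ∫ t in Set.Ioo (1-ε/2) 1, g t := by
      have hconst : ∫ _t in Set.Ioo (1-ε/2) 1, (m*(dd-cc)) ∂volume = (m*(dd-cc)) * (ε/2) := by
        rw [MeasureTheory.setIntegral_const, Real.volume_real_Ioo_of_le (by linarith), smul_eq_mul]
        ring
      rw [← hconst]
      refine MeasureTheory.setIntegral_mono_on
        (MeasureTheory.integrableOn_const ?_) (hg_int.mono_set hsub)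
        measurableSet_Ioo (fun t ht => hlow t ht)
      rw [Real.volume_Ioo]; exact ENNReal.ofReal_ne_top
    rw [hknapp]
    calc min c₁ c₂ * ε ^ (((n:ℝ)+1)/2 - s)
        ≤ c₁ * ε ^ (((n:ℝ)+1)/2 - s) :=
          mul_le_mul_of_nonneg_right (min_le_left _ _) (Real.rpow_nonneg hε.le _)
      _ = (ε/2) * ((Real.sqrt ε) ^ (n-2) / (2*ε) ^ s * (dd - cc)) := (low_arith hn hε).symm
      _ = (m*(dd-cc)) * (ε/2) := by rw [hmdef]; ring
      _ ≤ ∫ t in Set.Ioo (1-ε/2) 1, g t := h2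
      _ ≤ ∫ t in Set.Ioc (1-ε) 1, g t := h1
  · -- UPPER BOUND
    rw [hknapp]
    have h1 : ∫ t in Set.Ioc (1-ε) 1, g t ≤ ∫ t in Set.Ioc (1-ε) 1, maj t := by
      refine MeasureTheory.setIntegral_mono_on_ae hg_int hmajIntOn measurableSet_Ioc ?_
      filter_upwards [hne] with t htne htm
      exact hup t ⟨htm.1, lt_of_le_of_ne htm.2 htne⟩
    have hint : (∫ t in (1-ε)..1, (1-t) ^ (-(s/2))) = ε ^ (1-s/2) / (1-s/2) := by
      have e := intervalIntegral.integral_comp_sub_left (a := 1-ε) (b := 1)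
        (fun x : ℝ => x ^ (-(s/2))) 1
      rw [e]
      norm_num
      rw [integral_rpow (Or.inl (by linarith))]
      rw [Real.zero_rpow (by linarith)]
      norm_num
      congr 1 <;> ring
    have h2 : ∫ t in Set.Ioc (1-ε) 1, maj t
        = R ^ (n-2) * (R ^ (1-s) / (1-s)) * (ε ^ (1-s/2) / (1-s/2)) := by
      rw [← intervalIntegral.integral_of_le (by linarith : 1-ε ≤ (1:ℝ))]
      rw [hmajdef]
      rw [intervalIntegral.integral_mul_const, intervalIntegral.integral_const_mul, hint]
      ring
    have h3 := up_arith hn hs0 hs1 hε hRpos.le hRle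
    calc ∫ t in Set.Ioc (1-ε) 1, g t ≤ ∫ t in Set.Ioc (1-ε) 1, maj t := h1
      _ = R ^ (n-2) * (R ^ (1-s) / (1-s)) * (ε ^ (1-s/2) / (1-s/2)) := h2
      _ ≤ c₂ * ε ^ (((n:ℝ)+1)/2 - s) := h3
      _ ≤ max c₁ c₂ * ε ^ (((n:ℝ)+1)/2 - s) :=
          mul_le_mul_of_nonneg_right (le_max_right _ _) (Real.rpow_nonneg hε.le _)
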